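/- Let v, x1, y1, x2, y2 be real numbers with v > 1, y1 ≥ 0, y2 ≥ 0 and x1 ≤ x2. Then max(x2 − x1, |y1 − y2|) ≤ y1 + y2 + max(0, (x2 − y2) − (x1 + y1))/v if and only if x2 − y2 ≤ x1 + y1. -/
import Mathlib

/-- Characterization of the `L_∞` walking region: the direct travel time between
`(x1,y1)` and `(x2,y2)` is at most the optimal highway time iff
`x2 - y2 ≤ x1 + y1`. -/
theorem stmt_12 (v x1 y1 x2 y2 : ℝ) (hv : 1 < v)
    (hy1 : 0 ≤ y1) (hy2 : 0 ≤ y2) (hx : x1 ≤ x2) :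
    max (x2 - x1) |y1 - y2| ≤ y1 + y2 + max 0 ((x2 - y2) - (x1 + y1)) / v ↔
      x2 - y2 ≤ x1 + y1 := by
  have hv0 : 0 < v := lt_trans one_pos hv
  constructor
  · intro h
    by_contra hc
    push_neg at hc
    have hd : 0 < (x2 - y2) - (x1 + y1) := by linarith
    rw [max_eq_right hd.le] at h
    have h1 : x2 - x1 ≤ y1 + y2 + ((x2 - y2) - (x1 + y1)) / v :=
      le_trans (le_max_left _ _) h
    have h2 : ((x2 - y2) - (x1 + y1)) / v < (x2 - y2) - (x1 + y1) :=
      div_lt_self hd hv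
    linarith
  · intro h
    rw [max_eq_left (by linarith : x2 - y2 - (x1 + y1) ≤ 0)]
    simp only [zero_div, add_zero]
    rw [max_le_iff, abs_le]
    refine ⟨by linarith, by linarith, by linarith⟩
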